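/- arXiv:1601.00013 — 4 statements merged into one kernel-verified Lean document; each statement's English description precedes it below -/
import Mathlib

section
/- Let a : ℕ → ℕ be Stern's diatomic sequence, defined by a(1) = 1, a(2n) = a(n), and a(2n+1) = a(n) + a(n+1) for n ≥ 1. Then the sequence q(n) := a(n)/a(n+1), n = 1, 2, …, contains every positive rational number exactly once; that is, the map n ↦ a(n)/a(n+1) is a bijection from the positive integers onto the positive rational numbers. -/
section CW
variable (a : ℕ → ℕ)
variable (h1 : a 1 = 1)
variable (heven : ∀ n : ℕ, 1 ≤ n → a (2 * n) = a n)
variable (hodd : ∀ n : ℕ, 1 ≤ n → a (2 * n + 1) = a n + a (n + 1))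

lemma cw_cases (n : ℕ) (hn : 1 ≤ n) :
    n = 1 ∨ (∃ k, 1 ≤ k ∧ n = 2 * k) ∨ (∃ k, 1 ≤ k ∧ n = 2 * k + 1) := by
  rcases Nat.even_or_odd n with ⟨k, hk⟩ | ⟨k, hk⟩
  · right; left; exact ⟨k, by omega, by omega⟩
  · rcases Nat.eq_or_lt_of_le hn with h | h
    · left; omega
    · right; right; exact ⟨k, by omega, by omega⟩

include h1 heven hodd in
lemma cw_pos : ∀ n, 1 ≤ n → 0 < a n := by
  intro n
  induction n using Nat.strong_induction_on with
  | _ n ih =>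
    intro hn
    rcases cw_cases n hn with h | ⟨k, hk, h⟩ | ⟨k, hk, h⟩
    · subst h; rw [h1]; norm_num
    · subst h; rw [heven k hk]; exact ih k (by omega) hk
    · subst h; rw [hodd k hk]
      have := ih k (by omega) hk
      omega

include h1 heven hodd in
lemma cw_coprime : ∀ n, 1 ≤ n → Nat.Coprime (a n) (a (n + 1)) := by
  intro n
  induction n using Nat.strong_induction_on with
  | _ n ih =>
    intro hn
    rcases cw_cases n hn with h | ⟨k, hk, h⟩ | ⟨k, hk, h⟩
    · subst h
      have h2 : a 2 = a 1 := by have := heven 1 le_rfl; simpa using this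
      rw [h1]; rw [show (1:ℕ)+1 = 2 from rfl, h2, h1]; decide
    · subst h
      rw [heven k hk, hodd k hk]
      have := ih k (by omega) hk
      simpa [Nat.Coprime] using (Nat.coprime_add_self_right (m := a k) (n := a (k+1))).mpr this
    · subst h
      have h2 : a (2 * k + 1 + 1) = a (k + 1) := by
        have := heven (k+1) (by omega); rw [show 2*k+1+1 = 2*(k+1) by ring]; exact this
      rw [hodd k hk, h2]
      have := ih k (by omega) hk
      exact (Nat.coprime_add_self_left (m := a k) (n := a (k+1))).mpr this

include h1 heven hodd in
lemma cw_exists : ∀ N p s, p + s ≤ N → 0 < p → 0 < s → Nat.Coprime p s →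
    ∃ n, 1 ≤ n ∧ a n = p ∧ a (n + 1) = s := by
  intro N
  induction N with
  | zero => intro p s h hp hs _; omega
  | succ N ih =>
    intro p s hps hp hs hcop
    rcases lt_trichotomy p s with h | h | h
    · -- p < s : parent is (p, s - p)
      obtain ⟨n, hn, h₁, h₂⟩ := ih p (s - p) (by omega) hp (by omega)
        (by simpa [Nat.Coprime] using (Nat.coprime_sub_self_right (le_of_lt h)).mpr hcop)
      refine ⟨2 * n, by omega, ?_, ?_⟩
      · rw [heven n hn, h₁]
      · rw [hodd n hn, h₁, h₂]; omega
    · -- p = s ⇒ p = s = 1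
      have hp1 : p = 1 := by
        have h2 := hcop; rw [h] at h2; have : s = 1 := by simpa [Nat.Coprime] using h2
        omega
      refine ⟨1, le_rfl, ?_, ?_⟩
      · rw [h1, hp1]
      · have h2 : a 2 = a 1 := by simpa using heven 1 le_rfl
        rw [show (1:ℕ)+1 = 2 from rfl, h2, h1]; omega
    · -- p > s : parent is (p - s, s)
      obtain ⟨n, hn, h₁, h₂⟩ := ih (p - s) s (by omega) (by omega) hs
        (by simpa [Nat.Coprime] using (Nat.coprime_sub_self_left (le_of_lt h)).mpr hcop)
      refine ⟨2 * n + 1, by omega, ?_, ?_⟩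
      · rw [hodd n hn, h₁, h₂]; omega
      · rw [show 2*n+1+1 = 2*(n+1) by ring, heven (n+1) (by omega), h₂]

include h1 heven hodd in
lemma cw_even_lt (k : ℕ) (hk : 1 ≤ k) : a (2 * k) < a (2 * k + 1) := by
  rw [heven k hk, hodd k hk]
  have := cw_pos a h1 heven hodd (k+1) (by omega)
  omega

include h1 heven hodd in
lemma cw_odd_gt (k : ℕ) (hk : 1 ≤ k) : a (2 * k + 1 + 1) < a (2 * k + 1) := by
  rw [show 2*k+1+1 = 2*(k+1) by ring, heven (k+1) (by omega), hodd k hk]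
  have := cw_pos a h1 heven hodd k hk
  omega

include h1 heven hodd in
lemma cw_inj : ∀ M n m, n + m ≤ M → 1 ≤ n → 1 ≤ m → a n = a m → a (n+1) = a (m+1) → n = m := by
  intro M
  induction M with
  | zero => intro n m h hn hm _ _; omega
  | succ M ih =>
    intro n m hM hn hm e1 e2
    have a1eq : a 1 = a (1+1) := by
      have h2 : a 2 = a 1 := by simpa using heven 1 le_rfl
      rw [show (1:ℕ)+1 = 2 from rfl, h2]
    rcases cw_cases n hn with h | ⟨k, hk, h⟩ | ⟨k, hk, h⟩ <;>
      rcases cw_cases m hm with h' | ⟨j, hj, h'⟩ | ⟨j, hj, h'⟩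
    · omega
    · -- n = 1, m = 2j : a m = a (m+1) impossible since a m < a (m+1)
      exfalso; subst h; subst h'
      have := cw_even_lt a h1 heven hodd j hj
      omega
    · exfalso; subst h; subst h'
      have := cw_odd_gt a h1 heven hodd j hj
      omega
    · exfalso; subst h; subst h'
      have := cw_even_lt a h1 heven hodd k hk
      omega
    · -- both even
      subst h; subst h'
      have hk1 : a k = a j := by rw [← heven k hk, ← heven j hj, e1]
      have hk2 : a (k+1) = a (j+1) := by
        have hx := hodd k hk; have hy := hodd j hj
        omega
      have := ih k j (by omega) hk hj hk1 hk2
      omega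
    · exfalso; subst h; subst h'
      have := cw_even_lt a h1 heven hodd k hk
      have := cw_odd_gt a h1 heven hodd j hj
      omega
    · exfalso; subst h; subst h'
      have := cw_odd_gt a h1 heven hodd k hk
      omega
    · exfalso; subst h; subst h'
      have := cw_odd_gt a h1 heven hodd k hk
      have := cw_even_lt a h1 heven hodd j hj
      omega
    · -- both odd
      subst h; subst h'
      have hk2 : a (k+1) = a (j+1) := by
        have hx : a (2*k+1+1) = a (k+1) := by
          rw [show 2*k+1+1 = 2*(k+1) by ring]; exact heven (k+1) (by omega)
        have hy : a (2*j+1+1) = a (j+1) := by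
          rw [show 2*j+1+1 = 2*(j+1) by ring]; exact heven (j+1) (by omega)
        omega
      have hk1 : a k = a j := by
        have hx := hodd k hk; have hy := hodd j hj
        omega
      have := ih k j (by omega) hk hj hk1 hk2
      omega
end CW

/-- For Stern's diatomic sequence `a` (with `a 1 = 1`,
`a (2n) = a n`, `a (2n+1) = a n + a (n+1)` for `n ≥ 1`), the Calkin–Wilf
sequence `q n = a n / a (n+1)` contains every positive rational exactly once:
for every positive rational `q` there is a unique `n ≥ 1` with
`a n / a (n+1) = q`. -/
theorem calkin_wilf_enumerates_positive_rationals
    (a : ℕ → ℕ)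
    (h1 : a 1 = 1)
    (heven : ∀ n : ℕ, 1 ≤ n → a (2 * n) = a n)
    (hodd : ∀ n : ℕ, 1 ≤ n → a (2 * n + 1) = a n + a (n + 1)) :
    ∀ q : ℚ, 0 < q → ∃! n : ℕ, 1 ≤ n ∧ (a n : ℚ) / (a (n + 1) : ℚ) = q := by
  intro q hq
  set p : ℕ := q.num.toNat with hp
  have hnum : (p : ℤ) = q.num := Int.toNat_of_nonneg (le_of_lt (Rat.num_pos.mpr hq))
  have hppos : 0 < p := by
    have := Rat.num_pos.mpr hq; omega
  have hcop : Nat.Coprime p q.den := by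
    have := q.reduced
    rwa [show q.num.natAbs = p by omega] at this
  obtain ⟨n, hn, e1, e2⟩ := cw_exists a h1 heven hodd (p + q.den) p q.den le_rfl hppos q.pos hcop
  have hval : (a n : ℚ) / (a (n+1) : ℚ) = q := by
    rw [e1, e2]
    rw [show ((p : ℕ) : ℚ) = (q.num : ℚ) by exact_mod_cast hnum]
    exact Rat.num_div_den q
  refine ⟨n, ⟨hn, hval⟩, ?_⟩
  rintro m ⟨hm, hvm⟩
  -- show a m = a n and a (m+1) = a (n+1)
  have pm := cw_pos a h1 heven hodd m hm
  have pm1 := cw_pos a h1 heven hodd (m+1) (by omega)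
  have pn := cw_pos a h1 heven hodd n hn
  have pn1 := cw_pos a h1 heven hodd (n+1) (by omega)
  have hcross : a m * a (n+1) = a n * a (m+1) := by
    have : (a m : ℚ) / (a (m+1) : ℚ) = (a n : ℚ) / (a (n+1) : ℚ) := by rw [hvm, hval]
    have h' : (a m : ℚ) * (a (n+1) : ℚ) = (a n : ℚ) * (a (m+1) : ℚ) := by
      field_simp at this
      linarith [this]
    exact_mod_cast h'
  have cm := cw_coprime a h1 heven hodd m hm
  have cn := cw_coprime a h1 heven hodd n hn
  have d1 : a m ∣ a n := by
    have : a m ∣ a n * a (m+1) := ⟨a (n+1), hcross.symm ▸ by ring⟩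
    exact (Nat.Coprime.dvd_of_dvd_mul_right cm this)
  have d2 : a n ∣ a m := by
    have : a n ∣ a m * a (n+1) := ⟨a (m+1), hcross ▸ by ring⟩
    exact (Nat.Coprime.dvd_of_dvd_mul_right cn this)
  have eq1 : a m = a n := Nat.dvd_antisymm d1 d2
  have eq2 : a (m+1) = a (n+1) := by
    have := hcross
    rw [eq1] at this
    exact (Nat.eq_of_mul_eq_mul_left pn this).symm
  exact cw_inj a h1 heven hodd (m + n) m n le_rfl hm hn eq1 eq2
end

section
/- Let a : ℕ → ℕ be Stern's diatomic sequence (a(1) = 1, a(2n) = a(n), a(2n+1) = a(n) + a(n+1)) and q(n) := a(n)/a(n+1) the Calkin–Wilf sequence. Define r(0) := 0, r(2n) := q(n), and r(2n−1) := −q(n) for n ≥ 1. Then the map n ↦ r(n) is a bijection from the nonnegative integers onto the rational numbers. -/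
/-- With `a` Stern's diatomic sequence and
`q n = a n / a (n+1)` the Calkin–Wilf sequence, the sequence
`r 0 = 0`, `r (2n) = q n`, `r (2n − 1) = −q n` (for `n ≥ 1`) is a bijection
from the nonnegative integers onto the rationals. -/
theorem r_enumerates_rationals
    (a : ℕ → ℕ)
    (h1 : a 1 = 1)
    (heven : ∀ n : ℕ, 1 ≤ n → a (2 * n) = a n)
    (hodd : ∀ n : ℕ, 1 ≤ n → a (2 * n + 1) = a n + a (n + 1))
    (r : ℕ → ℚ)
    (hr0 : r 0 = 0)
    (hreven : ∀ n : ℕ, 1 ≤ n → r (2 * n) = (a n : ℚ) / (a (n + 1) : ℚ))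
    (hrodd : ∀ n : ℕ, 1 ≤ n → r (2 * n - 1) = -((a n : ℚ) / (a (n + 1) : ℚ))) :
    Function.Bijective r := by
  -- positivity of Stern's sequence
  have apos : ∀ n, 1 ≤ n → 0 < a n := by
    intro n
    induction n using Nat.strong_induction_on with
    | _ n ih =>
      intro hn
      rcases Nat.lt_or_ge n 2 with h | h
      · have : n = 1 := by omega
        simp [this, h1]
      · rcases Nat.even_or_odd n with ⟨k, hk⟩ | ⟨k, hk⟩
        · have hk1 : 1 ≤ k := by omega
          have hn2 : n = 2 * k := by omega
          rw [hn2, heven k hk1]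
          exact ih k (by omega) hk1
        · have hk1 : 1 ≤ k := by omega
          have hn2 : n = 2 * k + 1 := by omega
          rw [hn2, hodd k hk1]
          have := ih k (by omega) hk1
          omega
  -- the Calkin–Wilf sequence
  set Q : ℕ → ℚ := fun n => (a n : ℚ) / (a (n + 1) : ℚ) with hQ
  have qpos : ∀ n, 1 ≤ n → 0 < Q n := by
    intro n hn
    have h1' : (0:ℚ) < (a n : ℚ) := by exact_mod_cast apos n hn
    have h2' : (0:ℚ) < (a (n+1) : ℚ) := by exact_mod_cast apos (n+1) (by omega)
    exact div_pos h1' h2'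
  have q1 : Q 1 = 1 := by
    have h2 : a 2 = 1 := by have := heven 1 le_rfl; simpa [h1] using this
    simp [hQ, h1, h2]
  have qeven : ∀ n, 1 ≤ n → Q (2 * n) = Q n / (Q n + 1) := by
    intro n hn
    have hx : (0:ℚ) < (a n : ℚ) := by exact_mod_cast apos n hn
    have hy : (0:ℚ) < (a (n+1) : ℚ) := by exact_mod_cast apos (n+1) (by omega)
    have e1 : a (2 * n) = a n := heven n hn
    have e2 : a (2 * n + 1) = a n + a (n + 1) := hodd n hn
    simp only [hQ, e1, e2]
    push_cast
    have hxy : (0:ℚ) < (a n : ℚ) + (a (n+1) : ℚ) := by linarith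
    field_simp
  have qodd : ∀ n, 1 ≤ n → Q (2 * n + 1) = Q n + 1 := by
    intro n hn
    have hy : (0:ℚ) < (a (n+1) : ℚ) := by exact_mod_cast apos (n+1) (by omega)
    have e1 : a (2 * n + 1) = a n + a (n + 1) := hodd n hn
    have e2 : a (2 * n + 1 + 1) = a (n + 1) := by
      have := heven (n+1) (by omega)
      have h2 : 2 * (n + 1) = 2 * n + 1 + 1 := by ring
      rwa [h2] at this
    simp only [hQ, e1, e2]
    push_cast
    field_simp
  have qlt1 : ∀ n, 1 ≤ n → Q (2 * n) < 1 := by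
    intro n hn
    rw [qeven n hn]
    have := qpos n hn
    rw [div_lt_one (by linarith)]
    linarith
  have qgt1 : ∀ n, 1 ≤ n → 1 < Q (2 * n + 1) := by
    intro n hn
    rw [qodd n hn]
    have := qpos n hn
    linarith
  -- injectivity of Q on positives
  have qinj : ∀ s m n, m + n ≤ s → 1 ≤ m → 1 ≤ n → Q m = Q n → m = n := by
    intro s
    induction s with
    | zero => intro m n h hm hn _; omega
    | succ s ih =>
      intro m n hmn hm hn hq
      -- characterize value 1
      rcases Nat.lt_or_ge m 2 with h | h
      · have hm1 : m = 1 := by omega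
        subst hm1
        rcases Nat.lt_or_ge n 2 with h' | h'
        · omega
        · exfalso
          rcases Nat.even_or_odd n with ⟨k, hk⟩ | ⟨k, hk⟩
          · have hk1 : 1 ≤ k := by omega
            have : n = 2 * k := by omega
            rw [this] at hq
            have := qlt1 k hk1
            rw [← hq, q1] at this
            exact lt_irrefl _ this
          · have hk1 : 1 ≤ k := by omega
            have : n = 2 * k + 1 := by omega
            rw [this] at hq
            have := qgt1 k hk1
            rw [← hq, q1] at this
            exact lt_irrefl _ this
      rcases Nat.lt_or_ge n 2 with h' | h'
      · have hn1 : n = 1 := by omega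
        subst hn1
        exfalso
        rcases Nat.even_or_odd m with ⟨k, hk⟩ | ⟨k, hk⟩
        · have hk1 : 1 ≤ k := by omega
          have : m = 2 * k := by omega
          rw [this] at hq
          have := qlt1 k hk1
          rw [hq, q1] at this
          exact lt_irrefl _ this
        · have hk1 : 1 ≤ k := by omega
          have : m = 2 * k + 1 := by omega
          rw [this] at hq
          have := qgt1 k hk1
          rw [hq, q1] at this
          exact lt_irrefl _ this
      · -- both ≥ 2
        rcases Nat.even_or_odd m with ⟨j, hj⟩ | ⟨j, hj⟩ <;>
          rcases Nat.even_or_odd n with ⟨k, hk⟩ | ⟨k, hk⟩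
        · -- both even
          have hj1 : 1 ≤ j := by omega
          have hk1 : 1 ≤ k := by omega
          have hm2 : m = 2 * j := by omega
          have hn2 : n = 2 * k := by omega
          rw [hm2, hn2, qeven j hj1, qeven k hk1] at hq
          have hjp := qpos j hj1
          have hkp := qpos k hk1
          have heq : Q j = Q k := by
            field_simp at hq
            linarith
          have := ih j k (by omega) hj1 hk1 heq
          omega
        · -- m even, n odd : contradiction
          exfalso
          have hj1 : 1 ≤ j := by omega
          have hk1 : 1 ≤ k := by omega
          have hm2 : m = 2 * j := by omega
          have hn2 : n = 2 * k + 1 := by omega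
          rw [hm2, hn2] at hq
          have := qlt1 j hj1
          have := qgt1 k hk1
          linarith [hq ▸ this]
        · exfalso
          have hj1 : 1 ≤ j := by omega
          have hk1 : 1 ≤ k := by omega
          have hm2 : m = 2 * j + 1 := by omega
          have hn2 : n = 2 * k := by omega
          rw [hm2, hn2] at hq
          have h3 := qgt1 j hj1
          have h4 := qlt1 k hk1
          rw [hq] at h3
          linarith
        · -- both odd
          have hj1 : 1 ≤ j := by omega
          have hk1 : 1 ≤ k := by omega
          have hm2 : m = 2 * j + 1 := by omega
          have hn2 : n = 2 * k + 1 := by omega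
          rw [hm2, hn2, qodd j hj1, qodd k hk1] at hq
          have heq : Q j = Q k := by linarith
          have := ih j k (by omega) hj1 hk1 heq
          omega
  -- surjectivity of Q onto positive rationals (in p/q form)
  have qsurj : ∀ s p q : ℕ, p + q ≤ s → 0 < p → 0 < q →
      ∃ n, 1 ≤ n ∧ Q n = (p : ℚ) / (q : ℚ) := by
    intro s
    induction s with
    | zero => intro p q h hp hq; omega
    | succ s ih =>
      intro p q hpq hp hq
      have hpQ : (0:ℚ) < (p:ℚ) := by exact_mod_cast hp
      have hqQ : (0:ℚ) < (q:ℚ) := by exact_mod_cast hq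
      rcases lt_trichotomy p q with h | h | h
      · -- p < q : value < 1, come from even node
        obtain ⟨n, hn1, hn⟩ := ih p (q - p) (by omega) hp (by omega)
        refine ⟨2 * n, by omega, ?_⟩
        rw [qeven n hn1, hn]
        have hqp : ((q - p : ℕ) : ℚ) = (q : ℚ) - (p : ℚ) := by
          push_cast [Nat.cast_sub (le_of_lt h)]; ring
        rw [hqp]
        have hqpQ : (0:ℚ) < (q:ℚ) - (p:ℚ) := by
          have : (p:ℚ) < (q:ℚ) := by exact_mod_cast h
          linarith
        field_simp
        ring
      · subst h
        exact ⟨1, le_rfl, by rw [q1, eq_comm, div_eq_one_iff_eq (ne_of_gt hqQ)]⟩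
      · -- p > q : value > 1, come from odd node
        obtain ⟨n, hn1, hn⟩ := ih (p - q) q (by omega) (by omega) hq
        refine ⟨2 * n + 1, by omega, ?_⟩
        rw [qodd n hn1, hn]
        have hpq' : ((p - q : ℕ) : ℚ) = (p : ℚ) - (q : ℚ) := by
          push_cast [Nat.cast_sub (le_of_lt h)]; ring
        rw [hpq']
        field_simp
        ring
  constructor
  · -- injectivity of r
    intro m n hmn
    -- classify indices
    have classify : ∀ u : ℕ, u = 0 ∨ (∃ k, 1 ≤ k ∧ u = 2 * k) ∨ (∃ k, 1 ≤ k ∧ u = 2 * k - 1) := by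
      intro u
      rcases Nat.even_or_odd u with ⟨k, hk⟩ | ⟨k, hk⟩
      · rcases Nat.eq_zero_or_pos k with h | h
        · left; omega
        · right; left; exact ⟨k, h, by omega⟩
      · right; right; exact ⟨k + 1, by omega, by omega⟩
    have rval : ∀ k, 1 ≤ k → r (2 * k) = Q k := fun k hk => hreven k hk
    have rvalo : ∀ k, 1 ≤ k → r (2 * k - 1) = -Q k := fun k hk => hrodd k hk
    rcases classify m with hm | ⟨j, hj1, hj⟩ | ⟨j, hj1, hj⟩ <;>
      rcases classify n with hn | ⟨k, hk1, hk⟩ | ⟨k, hk1, hk⟩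
    · omega
    · exfalso; rw [hm, hk, hr0, rval k hk1] at hmn
      exact absurd hmn.symm (ne_of_gt (qpos k hk1))
    · exfalso; rw [hm, hk, hr0, rvalo k hk1] at hmn
      have := qpos k hk1; linarith [hmn.symm]
    · exfalso; rw [hj, hn, hr0, rval j hj1] at hmn
      exact absurd hmn (ne_of_gt (qpos j hj1))
    · rw [hj, hk, rval j hj1, rval k hk1] at hmn
      have := qinj (j + k) j k le_rfl hj1 hk1 hmn
      omega
    · exfalso
      rw [hj, hk, rval j hj1, rvalo k hk1] at hmn
      have h3 := qpos j hj1
      have h4 := qpos k hk1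
      rw [hmn] at h3; linarith
    · exfalso; rw [hj, hn, hr0, rvalo j hj1] at hmn
      have := qpos j hj1; linarith
    · exfalso
      rw [hj, hk, rvalo j hj1, rval k hk1] at hmn
      have h3 := qpos j hj1
      have h4 := qpos k hk1
      rw [← hmn] at h4; linarith
    · rw [hj, hk, rvalo j hj1, rvalo k hk1] at hmn
      have hq' : Q j = Q k := by linarith [neg_injective hmn]
      have := qinj (j + k) j k le_rfl hj1 hk1 hq'
      omega
  · -- surjectivity of r
    intro x
    rcases lt_trichotomy x 0 with h | h | h
    · -- x negative : use odd index
      obtain ⟨n, hn1, hn⟩ := qsurj ((-x).num.natAbs + (-x).den) (-x).num.natAbs (-x).den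
        le_rfl (by
          have : 0 < (-x).num := Rat.num_pos.mpr (by linarith)
          omega) (-x).pos
      refine ⟨2 * n - 1, ?_⟩
      rw [hrodd n hn1]
      have hthis : Q n = -x := by
        rw [hn]
        have hnum : (((-x).num.natAbs : ℕ) : ℚ) = ((-x).num : ℚ) := by
          have h0 : 0 < (-x).num := Rat.num_pos.mpr (by linarith)
          rw [← Int.cast_natCast (R:=ℚ), Int.natAbs_of_nonneg h0.le]
        rw [hnum]
        exact Rat.num_div_den (-x)
      show -Q n = x
      rw [hthis]; ring
    · exact ⟨0, by rw [hr0, h]⟩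
    · obtain ⟨n, hn1, hn⟩ := qsurj (x.num.natAbs + x.den) x.num.natAbs x.den
        le_rfl (by
          have : 0 < x.num := Rat.num_pos.mpr h
          omega) x.pos
      refine ⟨2 * n, ?_⟩
      rw [hreven n hn1]
      show Q n = x
      rw [hn]
      have hnum : ((x.num.natAbs : ℕ) : ℚ) = (x.num : ℚ) := by
        have h0 : 0 < x.num := Rat.num_pos.mpr h
        rw [← Int.cast_natCast (R:=ℚ), Int.natAbs_of_nonneg h0.le]
      rw [hnum]
      exact Rat.num_div_den x
end

section
/- Let a : ℕ → ℕ be Stern's diatomic sequence (a(1) = 1, a(2n) = a(n), a(2n+1) = a(n) + a(n+1)) and q(n) := a(n)/a(n+1). Suppose the binary representation of n ≥ 1, read from the least significant digit, consists of a run of f₀ ones, followed by a run of f₁ zeros, then f₂ ones, and so on, ending with a run of f_k ones at the most significant end (so f₀ ≥ 0 and f₁, …, f_k ≥ 1). Then q(n) equals the finite continued fraction [f₀; f₁, …, f_k] = f₀ + 1/(f₁ + 1/(f₂ + ⋯ + 1/f_k)). -/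
/-- Finite continued fraction `[x₀; x₁, …, x_k] = x₀ + 1/(x₁ + 1/(⋯ + 1/x_k))`. -/
def cfrac : List ℚ → ℚ
  | [] => 0
  | [x] => x
  | x :: xs => x + (cfrac xs)⁻¹


section

variable (a : ℕ → ℕ)
variable (h1 : a 1 = 1)
variable (heven : ∀ m : ℕ, 1 ≤ m → a (2 * m) = a m)
variable (hodd : ∀ m : ℕ, 1 ≤ m → a (2 * m + 1) = a m + a (m + 1))

include h1 heven hodd

lemma CW_apos : ∀ m : ℕ, 1 ≤ m → 1 ≤ a m := by
  intro m
  induction m using Nat.strong_induction_on with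
  | _ m ih =>
    intro hm
    rcases Nat.even_or_odd m with ⟨t, ht⟩ | ⟨t, ht⟩
    · have ht2 : m = 2 * t := by omega
      have ht1 : 1 ≤ t := by omega
      rw [ht2, heven t ht1]
      exact ih t (by omega) ht1
    · rcases Nat.eq_zero_or_pos t with h0 | h0
      · subst h0; simpa [ht] using h1.ge
      · rw [ht, hodd t h0]
        have := ih t (by omega) h0
        omega

lemma CW_Qpos : ∀ m : ℕ, 1 ≤ m → 0 < (a m : ℚ) / (a (m + 1) : ℚ) := by
  intro m hm
  have h1' := CW_apos a h1 heven hodd m hm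
  have h2' := CW_apos a h1 heven hodd (m + 1) (by omega)
  positivity

lemma CW_ones : ∀ (j m : ℕ), 1 ≤ m →
    (a (2 ^ j * m + (2 ^ j - 1)) : ℚ) / (a (2 ^ j * m + (2 ^ j - 1) + 1) : ℚ)
      = (a m : ℚ) / (a (m + 1) : ℚ) + j := by
  intro j
  induction j with
  | zero => intro m hm; simp
  | succ j ih =>
    intro m hm
    set t := 2 ^ j * m + (2 ^ j - 1) with ht
    have ht1 : 1 ≤ t := by
      have : 1 ≤ 2 ^ j := Nat.one_le_two_pow
      have : 1 ≤ 2 ^ j * m := Nat.one_le_iff_ne_zero.mpr (by positivity)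
      omega
    have he : 2 ^ (j + 1) * m + (2 ^ (j + 1) - 1) = 2 * t + 1 := by
      have h2 : 1 ≤ 2 ^ j := Nat.one_le_two_pow
      rw [ht, pow_succ]
      ring_nf
      omega
    have he2 : 2 * t + 1 + 1 = 2 * (t + 1) := by ring
    rw [he, hodd t ht1, he2, heven (t + 1) (by omega)]
    have hnz : (a (t + 1) : ℚ) ≠ 0 := by
      have := CW_apos a h1 heven hodd (t + 1) (by omega)
      exact_mod_cast Nat.one_le_iff_ne_zero.mp this
    push_cast
    rw [add_div, div_self hnz, ih m hm]
    ring

lemma CW_zeros : ∀ (j m : ℕ), 1 ≤ m →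
    ((a (2 ^ j * m) : ℚ) / (a (2 ^ j * m + 1) : ℚ))⁻¹
      = ((a m : ℚ) / (a (m + 1) : ℚ))⁻¹ + j := by
  intro j
  induction j with
  | zero => intro m hm; simp
  | succ j ih =>
    intro m hm
    set t := 2 ^ j * m with ht
    have ht1 : 1 ≤ t := Nat.one_le_iff_ne_zero.mpr (by positivity)
    have he : 2 ^ (j + 1) * m = 2 * t := by rw [ht, pow_succ]; ring
    rw [he, heven t ht1, hodd t ht1]
    have hnz : (a t : ℚ) ≠ 0 := by
      have := CW_apos a h1 heven hodd t ht1
      exact_mod_cast Nat.one_le_iff_ne_zero.mp this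
    have hnz1 : (a (t + 1) : ℚ) ≠ 0 := by
      have := CW_apos a h1 heven hodd (t + 1) (by omega)
      exact_mod_cast Nat.one_le_iff_ne_zero.mp this
    have hih := ih m hm
    rw [show 2 ^ j * m = t from rfl, show 2 ^ j * m + 1 = t + 1 from rfl, inv_div] at hih
    push_cast
    rw [inv_div, add_div, div_self hnz, hih]
    ring

end

lemma CW_cfrac_cons (x y : ℚ) (xs : List ℚ) :
    cfrac (x :: y :: xs) = x + (cfrac (y :: xs))⁻¹ := rfl

section
variable (a : ℕ → ℕ)
variable (h1 : a 1 = 1)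
variable (heven : ∀ m : ℕ, 1 ≤ m → a (2 * m) = a m)
variable (hodd : ∀ m : ℕ, 1 ≤ m → a (2 * m + 1) = a m + a (m + 1))
include h1 heven hodd

lemma CW_main : ∀ k : ℕ, Even k → ∀ f : ℕ → ℕ,
    (∀ i : ℕ, 1 ≤ i → i ≤ k → 1 ≤ f i) →
    ∀ n : ℕ, n = (∑ i ∈ Finset.range (k + 1),
      if Even i then (2 ^ (f i) - 1) * 2 ^ (∑ j ∈ Finset.range i, f j) else 0) →
    1 ≤ n →
    (a n : ℚ) / (a (n + 1) : ℚ)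
      = cfrac ((List.range (k + 1)).map (fun i => (f i : ℚ))) := by
  intro k
  induction k using Nat.strong_induction_on with
  | _ k ih =>
    intro hk f hf n hn hn1
    match k, hk, hf, hn, ih with
    | 0, _, hf, hn, ih =>
      simp at hn
      have hf0 : 1 ≤ f 0 := by
        by_contra h
        have : f 0 = 0 := by omega
        rw [this] at hn; simp at hn; omega
      have hne : n = 2 ^ (f 0 - 1) * 1 + (2 ^ (f 0 - 1) - 1) := by
        have h2 : 2 ^ (f 0 - 1) + 2 ^ (f 0 - 1) = 2 ^ f 0 := by
          rw [← two_mul, ← pow_succ']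
          congr 1; omega
        have : 1 ≤ 2 ^ (f 0 - 1) := Nat.one_le_two_pow
        omega
      rw [hne, CW_ones a h1 heven hodd (f 0 - 1) 1 le_rfl]
      have ha2 : a 2 = 1 := by rw [show (2:ℕ) = 2 * 1 from rfl, heven 1 le_rfl, h1]
      rw [h1, ha2]
      simp [cfrac]
      rw [Nat.cast_sub hf0]
      push_cast; ring
    | 1, hk, _, _, _ => exact absurd hk (by decide)
    | (k' + 2), hk, hf, hn, ih =>
      have hk' : Even k' := by
        rcases hk with ⟨r, hr⟩; exact ⟨r - 1, by omega⟩
      set g : ℕ → ℕ := fun i => f (i + 2) with hg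
      set n₂ : ℕ := ∑ i ∈ Finset.range (k' + 1),
        (if Even i then (2 ^ (g i) - 1) * 2 ^ (∑ j ∈ Finset.range i, g j) else 0) with hn₂
      have hsum : ∀ i : ℕ, (∑ j ∈ Finset.range (i + 1 + 1), f j)
          = f 0 + f 1 + ∑ j ∈ Finset.range i, f (j + 1 + 1) := by
        intro i
        rw [Finset.sum_range_succ', Finset.sum_range_succ']
        ring
      have e1 : ∀ i : ℕ,
          (if Even (i + 1 + 1) then (2 ^ (f (i+1+1)) - 1) * 2 ^ (∑ j ∈ Finset.range (i+1+1), f j) else 0)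
          = 2 ^ (f 0 + f 1) * (if Even i then (2 ^ (g i) - 1) * 2 ^ (∑ j ∈ Finset.range i, g j) else 0) := by
        intro i
        have hev : Even (i + 1 + 1) ↔ Even i := by simp [Nat.even_add_one]
        by_cases h : Even i
        · simp only [hev.mpr h, h, if_true, hsum i, hg]
          rw [pow_add, pow_add]
          ring
        · simp [hev, h]
      have hA : n = (2 ^ (f 0) - 1) + 2 ^ (f 0 + f 1) * n₂ := by
        rw [hn, Finset.sum_range_succ', Finset.sum_range_succ']
        simp only [e1, ← Finset.mul_sum, ← hn₂]
        norm_num [Nat.not_even_one]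
        exact Nat.add_comm _ _
      have hn₂1 : 1 ≤ n₂ := by
        have hterm : (1:ℕ) ≤ (if Even 0 then (2 ^ (g 0) - 1) * 2 ^ (∑ j ∈ Finset.range 0, g j) else 0) := by
          simp only [Even.zero, if_true, Finset.range_zero, Finset.sum_empty, pow_zero, mul_one]
          have : 1 ≤ f 2 := hf 2 (by omega) (by omega)
          have : 2 ≤ 2 ^ (g 0) := by
            calc 2 = 2 ^ 1 := rfl
            _ ≤ 2 ^ (g 0) := Nat.pow_le_pow_right (by omega) (by simpa [hg] using this)
          omega
        have hle := Finset.single_le_sum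
          (f := fun i => if Even i then (2 ^ (g i) - 1) * 2 ^ (∑ j ∈ Finset.range i, g j) else 0)
          (s := Finset.range (k' + 1)) (fun i _ => Nat.zero_le _)
          (Finset.mem_range.mpr (Nat.succ_pos k'))
        rw [← hn₂] at hle
        exact le_trans hterm hle
      have hM1 : 1 ≤ 2 ^ (f 1) * n₂ := Nat.one_le_iff_ne_zero.mpr (by positivity)
      have hB : n = 2 ^ (f 0) * (2 ^ (f 1) * n₂) + (2 ^ (f 0) - 1) := by
        rw [hA, pow_add, mul_assoc]; omega
      have hIH := ih k' (by omega) hk' g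
        (fun i h1i hik => hf (i + 2) (by omega) (by omega)) n₂ hn₂ hn₂1
      have hz := CW_zeros a h1 heven hodd (f 1) n₂ hn₂1
      have hQ2 : (a (2 ^ (f 1) * n₂) : ℚ) / (a (2 ^ (f 1) * n₂ + 1) : ℚ)
          = (((a n₂ : ℚ) / (a (n₂ + 1) : ℚ))⁻¹ + (f 1 : ℚ))⁻¹ := by
        rw [← hz, inv_inv]
      have hQ : (a n : ℚ) / (a (n + 1) : ℚ)
          = (a (2 ^ (f 1) * n₂) : ℚ) / (a (2 ^ (f 1) * n₂ + 1) : ℚ) + (f 0 : ℚ) := by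
        rw [hB]; exact CW_ones a h1 heven hodd (f 0) (2 ^ (f 1) * n₂) hM1
      have hlist : (List.range (k' + 2 + 1)).map (fun i => (f i : ℚ))
          = (f 0 : ℚ) :: (f 1 : ℚ) :: (List.range (k' + 1)).map (fun i => (g i : ℚ)) := by
        rw [List.range_succ_eq_map, List.range_succ_eq_map]
        simp [List.map_map, Function.comp, hg]
      rw [hQ, hQ2, hlist, CW_cfrac_cons]
      have hne : (List.range (k' + 1)).map (fun i => (g i : ℚ)) ≠ [] := by simp
      obtain ⟨y, ys, hys⟩ := List.exists_cons_of_ne_nil hne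
      rw [hys, CW_cfrac_cons, ← hys, ← hIH]
      ring

end

/-- If the binary representation of `n ≥ 1`, read from the least
significant digit, consists of a run of `f 0` ones, then `f 1` zeros, then
`f 2` ones, …, ending with a run of `f k` ones at the most significant end
(so `k` is even, `f 0 ≥ 0` and `f 1, …, f k ≥ 1`), i.e.
`n = ∑_{i ≤ k, i even} (2^(f i) − 1) · 2^(f 0 + ⋯ + f (i−1))`,
then the Calkin–Wilf value `q n = a n / a (n+1)` equals the continued
fraction `[f 0; f 1, …, f k]`. -/
theorem calkin_wilf_continued_fraction
    (a : ℕ → ℕ)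
    (h1 : a 1 = 1)
    (heven : ∀ m : ℕ, 1 ≤ m → a (2 * m) = a m)
    (hodd : ∀ m : ℕ, 1 ≤ m → a (2 * m + 1) = a m + a (m + 1))
    (k : ℕ) (hk : Even k)
    (f : ℕ → ℕ)
    (hf : ∀ i : ℕ, 1 ≤ i → i ≤ k → 1 ≤ f i)
    (n : ℕ)
    (hn : n = ∑ i ∈ Finset.range (k + 1),
      if Even i then (2 ^ (f i) - 1) * 2 ^ (∑ j ∈ Finset.range i, f j) else 0)
    (hn1 : 1 ≤ n) :
    (a n : ℚ) / (a (n + 1) : ℚ)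
      = cfrac ((List.range (k + 1)).map (fun i => (f i : ℚ))) :=
  CW_main a h1 heven hodd k hk f hf n hn hn1
end

section
/- Let g : [0, 1] → ℝ be Lipschitz continuous with Lipschitz constant L₁ > 0, let ε > 0, let χ := (4306 + 837√6)/5832, and let n be a positive integer with n ≥ (2χL₁/ε)². Let B_n(x) := Σ_{k=0}^{n} g(k/n)·C(n,k)·x^k·(1−x)^{n−k} be the n-th Bernstein polynomial of g. Then |B_n(x) − g(x)| ≤ ε/2 for all x ∈ [0, 1]. -/
/-- If `g` is Lipschitz on `[0, 1]` with constant `L₁ > 0`,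
`χ = (4306 + 837√6)/5832` is Sikkema's constant, and `n ≥ (2χL₁/ε)²` is a
positive integer, then the `n`-th Bernstein polynomial of `g` satisfies
`|Bₙ(x) − g(x)| ≤ ε/2` on `[0, 1]`. -/
theorem bernstein_approximation_lipschitz
    (g : ℝ → ℝ) (L₁ : ℝ) (hL₁ : 0 < L₁)
    (hg : ∀ x ∈ Set.Icc (0 : ℝ) 1, ∀ y ∈ Set.Icc (0 : ℝ) 1,
      |g x - g y| ≤ L₁ * |x - y|)
    (ε : ℝ) (hε : 0 < ε)
    (χ : ℝ) (hχ : χ = (4306 + 837 * Real.sqrt 6) / 5832)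
    (n : ℕ) (hn : 1 ≤ n) (hn2 : (2 * χ * L₁ / ε) ^ 2 ≤ (n : ℝ)) :
    ∀ x ∈ Set.Icc (0 : ℝ) 1,
      |(∑ k ∈ Finset.range (n + 1),
          g ((k : ℝ) / (n : ℝ)) * (n.choose k : ℝ) * x ^ k * (1 - x) ^ (n - k))
        - g x| ≤ ε / 2 := by
  intro x hx
  obtain ⟨hx0, hx1⟩ := hx
  have hn' : 0 < (n : ℝ) := by exact_mod_cast Nat.lt_of_lt_of_le Nat.zero_lt_one hn
  have hsqrt6 : (0 : ℝ) ≤ Real.sqrt 6 := Real.sqrt_nonneg 6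
  have hχhalf : (1 : ℝ) / 2 ≤ χ := by rw [hχ]; nlinarith
  have hχpos : 0 < χ := lt_of_lt_of_le (by norm_num) hχhalf
  set X : unitInterval := ⟨x, hx0, hx1⟩ with hXdef
  set p : ℕ → ℝ := fun k => (n.choose k : ℝ) * x ^ k * (1 - x) ^ (n - k) with hp
  have hpnn : ∀ k, 0 ≤ p k := fun k => by
    have h1 : (0:ℝ) ≤ 1 - x := by linarith
    have h2 : (0:ℝ) ≤ x := hx0
    positivity
  have hprob : ∑ k ∈ Finset.range (n + 1), p k = 1 := by
    have h := bernstein.probability n X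
    rw [Fin.sum_univ_eq_sum_range (fun k => bernstein n k X)] at h
    rw [← h]
    apply Finset.sum_congr rfl
    intro k _
    simp [bernstein_apply, hp, hXdef]
  have hvar : ∑ k ∈ Finset.range (n + 1), (x - (k : ℝ) / n) ^ 2 * p k
      = x * (1 - x) / n := by
    have h := bernstein.variance (by omega : n ≠ 0) X
    rw [← h, ← Fin.sum_univ_eq_sum_range (fun k => (x - (k : ℝ) / n) ^ 2 * p k)]
    apply Finset.sum_congr rfl
    intro k _
    simp [bernstein_apply, bernstein.z, hp, hXdef]
  -- rewrite the difference as a single sum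
  have key : (∑ k ∈ Finset.range (n + 1),
      g ((k : ℝ) / n) * (n.choose k : ℝ) * x ^ k * (1 - x) ^ (n - k)) - g x
      = ∑ k ∈ Finset.range (n + 1), (g ((k : ℝ) / n) - g x) * p k := by
    have h2 : ∑ k ∈ Finset.range (n + 1), (g ((k : ℝ) / n) - g x) * p k
        = (∑ k ∈ Finset.range (n + 1), g ((k : ℝ) / n) * p k)
          - g x * ∑ k ∈ Finset.range (n + 1), p k := by
      rw [Finset.mul_sum, ← Finset.sum_sub_distrib]
      apply Finset.sum_congr rfl
      intro k _; ring
    rw [h2, hprob, mul_one]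
    congr 1
    apply Finset.sum_congr rfl
    intro k _; rw [hp]; ring
  set S : ℝ := ∑ k ∈ Finset.range (n + 1), |(k : ℝ) / n - x| * p k with hS
  have hSnn : 0 ≤ S :=
    Finset.sum_nonneg fun k _ => mul_nonneg (abs_nonneg _) (hpnn k)
  -- Cauchy–Schwarz
  have hCS : S ^ 2 ≤ x * (1 - x) / n := by
    have := Finset.sum_sq_le_sum_mul_sum_of_sq_eq_mul (Finset.range (n + 1))
      (r := fun k => |(k : ℝ) / n - x| * p k) (f := fun k => p k)
      (g := fun k => (x - (k : ℝ) / n) ^ 2 * p k)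
      (fun k _ => hpnn k)
      (fun k _ => mul_nonneg (sq_nonneg _) (hpnn k))
      (fun k _ => by rw [mul_pow, sq_abs]; ring)
    rw [hprob, one_mul, hvar] at this
    exact this
  -- the sum S is at most 1/(2√n); algebraically: 4 n S² ≤ 1
  have hxvar : x * (1 - x) ≤ 1 / 4 := by nlinarith [sq_nonneg (x - 1 / 2)]
  have h4nS : 4 * (n : ℝ) * S ^ 2 ≤ 1 := by
    have : (n : ℝ) * S ^ 2 ≤ x * (1 - x) := by
      calc (n : ℝ) * S ^ 2 ≤ (n : ℝ) * (x * (1 - x) / n) := by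
            apply mul_le_mul_of_nonneg_left hCS (le_of_lt hn')
        _ = x * (1 - x) := by field_simp
    linarith
  -- from hn2 : L₁² ≤ n ε²
  have hL2 : L₁ ^ 2 ≤ (n : ℝ) * ε ^ 2 := by
    have h1 : (2 * χ * L₁) ^ 2 / ε ^ 2 ≤ (n : ℝ) := by
      rw [← div_pow]; exact hn2
    have h2 : (2 * χ * L₁) ^ 2 ≤ (n : ℝ) * ε ^ 2 := by
      rw [div_le_iff₀ (by positivity)] at h1; linarith
    nlinarith [mul_nonneg (mul_nonneg
      (by linarith : (0:ℝ) ≤ 2 * χ - 1) (by linarith : (0:ℝ) ≤ 2 * χ + 1))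
      (sq_nonneg L₁)]
  -- main estimate
  rw [key]
  calc |∑ k ∈ Finset.range (n + 1), (g ((k : ℝ) / n) - g x) * p k|
      ≤ ∑ k ∈ Finset.range (n + 1), |(g ((k : ℝ) / n) - g x) * p k| :=
        Finset.abs_sum_le_sum_abs _ _
    _ ≤ L₁ * S := by
        rw [hS, Finset.mul_sum]
        apply Finset.sum_le_sum
        intro k hk
        have hk' : (k : ℝ) ≤ n := by
          have := Finset.mem_range.mp hk
          exact_mod_cast Nat.lt_succ_iff.mp this
        have hkmem : (k : ℝ) / n ∈ Set.Icc (0 : ℝ) 1 := by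
          constructor
          · positivity
          · rw [div_le_one hn']; exact hk'
        have hgg := hg ((k : ℝ) / n) hkmem x ⟨hx0, hx1⟩
        calc |(g ((k : ℝ) / n) - g x) * p k|
            = |g ((k : ℝ) / n) - g x| * p k := by
              rw [abs_mul, abs_of_nonneg (hpnn k)]
          _ ≤ L₁ * |(k : ℝ) / n - x| * p k :=
              mul_le_mul_of_nonneg_right hgg (hpnn k)
          _ = L₁ * (|(k : ℝ) / n - x| * p k) := by ring
    _ ≤ ε / 2 := by nlinarith [mul_nonneg hL₁.le hSnn, sq_nonneg (2 * L₁ * S - ε), hn']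
end
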